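/- arXiv:1005.4715 — 7 statements merged into one kernel-verified Lean document; each statement's English description precedes it below -/
import Mathlib

section
/- Let a > 0, h ≠ 0, b ∈ ℝ, and N ∈ ℕ. Then (1/i)·[ Σ_{n=−N, n≠0}^{N} cot( −πnh i/a ) − Σ_{n=−N}^{N} cot( π(a/2 + (b − nh)i)/a ) ] = Σ_{n=−N}^{N} tanh( π(b+nh)/a ). Consequently, for every N, the N-street truncated conjugate velocity of the vortex at a/2 + ib equals that of the vortex at the origin. -/
open Finset

lemma cot_neg' (z : ℂ) : Complex.cot (-z) = -Complex.cot z := by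
  simp [Complex.cot_eq_cos_div_sin, Complex.cos_neg, Complex.sin_neg, div_neg, neg_div]

lemma cot_pi_div_two_add (z : ℂ) :
    Complex.cot ((Real.pi : ℂ)/2 + z) = -Complex.tan z := by
  rw [Complex.cot_eq_cos_div_sin, Complex.cos_add, Complex.sin_add, Complex.tan]
  simp [Complex.cos_pi_div_two, Complex.sin_pi_div_two, neg_div]

lemma cot_half (a t : ℝ) (ha : a ≠ 0) :
    Complex.cot ((Real.pi : ℂ) * ((a : ℂ)/2 + (t : ℂ) * Complex.I) / (a : ℂ)) =
      -((Real.tanh (Real.pi * t / a) : ℝ) : ℂ) * Complex.I := by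
  have ha' : (a : ℂ) ≠ 0 := by exact_mod_cast ha
  have harg : (Real.pi : ℂ) * ((a : ℂ)/2 + (t : ℂ) * Complex.I) / (a : ℂ)
      = (Real.pi : ℂ)/2 + ((Real.pi * t / a : ℝ) : ℂ) * Complex.I := by
    push_cast; field_simp
  rw [harg, cot_pi_div_two_add, Complex.tan_mul_I, ← Complex.ofReal_tanh]
  ring

lemma velocity_aux1 (S : ℂ) : (1 / Complex.I) * (0 - -S * Complex.I) = S := by
  rw [zero_sub, neg_mul, neg_neg, mul_comm, mul_one_div, mul_div_assoc,
    div_self Complex.I_ne_zero, mul_one]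

lemma velocity_aux2 (S : ℂ) : (1 / Complex.I) * (S * Complex.I - 0) = S := by
  rw [sub_zero, mul_comm, mul_one_div, mul_div_assoc, div_self Complex.I_ne_zero, mul_one]

/-- The N-street truncation of the conjugate velocity of the vortex at `a/2 + ib`,
in cotangent closed form, equals the truncated street velocity sum of hyperbolic
tangents; consequently it equals the truncated conjugate velocity of the vortex at
the origin. -/
theorem truncated_velocity_half (a h b : ℝ) (ha : 0 < a) (hh : h ≠ 0) (N : ℕ) :
    (1 / Complex.I) *
      ((∑ n ∈ (Finset.Icc (-(N : ℤ)) (N : ℤ)).erase 0,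
          Complex.cot (-(Real.pi : ℂ) * (n : ℂ) * (h : ℂ) * Complex.I / (a : ℂ))) -
        ∑ n ∈ Finset.Icc (-(N : ℤ)) (N : ℤ),
          Complex.cot ((Real.pi : ℂ) * ((a : ℂ) / 2 + ((b : ℂ) - (n : ℂ) * (h : ℂ)) * Complex.I) / (a : ℂ))) =
    ∑ n ∈ Finset.Icc (-(N : ℤ)) (N : ℤ), ((Real.tanh (Real.pi * (b + n * h) / a) : ℝ) : ℂ) ∧
    (1 / Complex.I) *
      ((∑ n ∈ (Finset.Icc (-(N : ℤ)) (N : ℤ)).erase 0,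
          Complex.cot (-(Real.pi : ℂ) * (n : ℂ) * (h : ℂ) * Complex.I / (a : ℂ))) -
        ∑ n ∈ Finset.Icc (-(N : ℤ)) (N : ℤ),
          Complex.cot ((Real.pi : ℂ) * ((a : ℂ) / 2 + ((b : ℂ) - (n : ℂ) * (h : ℂ)) * Complex.I) / (a : ℂ))) =
    (1 / Complex.I) *
      ((∑ n ∈ Finset.Icc (-(N : ℤ)) (N : ℤ),
          Complex.cot ((Real.pi : ℂ) * (-(a : ℂ) / 2 - ((b : ℂ) + (n : ℂ) * (h : ℂ)) * Complex.I) / (a : ℂ))) -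
        ∑ n ∈ (Finset.Icc (-(N : ℤ)) (N : ℤ)).erase 0,
          Complex.cot (-(Real.pi : ℂ) * (n : ℂ) * (h : ℂ) * Complex.I / (a : ℂ))) := by
  have ha0 : a ≠ 0 := ne_of_gt ha
  set s : Finset ℤ := Finset.Icc (-(N : ℤ)) (N : ℤ) with hs
  have hzero : (∑ n ∈ s.erase 0,
      Complex.cot (-(Real.pi : ℂ) * (n : ℂ) * (h : ℂ) * Complex.I / (a : ℂ))) = 0 := by
    refine Finset.sum_involution (fun n _ => -n) ?_ ?_ ?_ ?_
    · intro n hn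
      have : (-(Real.pi : ℂ)) * ((-n : ℤ) : ℂ) * (h : ℂ) * Complex.I / (a : ℂ)
          = -((-(Real.pi : ℂ)) * (n : ℂ) * (h : ℂ) * Complex.I / (a : ℂ)) := by
        push_cast; ring
      rw [this, cot_neg', add_neg_cancel]
    · intro n hn _
      have h0 : n ≠ 0 := (Finset.mem_erase.mp hn).1
      show -n ≠ n
      omega
    · intro n hn
      simp only [Finset.mem_erase, hs, Finset.mem_Icc] at hn ⊢
      omega
    · intro n hn; ring
  have hsum2 : (∑ n ∈ s,
      Complex.cot ((Real.pi : ℂ) * ((a : ℂ) / 2 + ((b : ℂ) - (n : ℂ) * (h : ℂ)) * Complex.I) / (a : ℂ)))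
      = -(∑ n ∈ s, ((Real.tanh (Real.pi * (b - n * h) / a) : ℝ) : ℂ)) * Complex.I := by
    calc (∑ n ∈ s,
        Complex.cot ((Real.pi : ℂ) * ((a : ℂ) / 2 + ((b : ℂ) - (n : ℂ) * (h : ℂ)) * Complex.I) / (a : ℂ)))
        = ∑ n ∈ s, -((Real.tanh (Real.pi * (b - n * h) / a) : ℝ) : ℂ) * Complex.I := by
          refine Finset.sum_congr rfl fun n _ => ?_
          have : ((b : ℂ) - (n : ℂ) * (h : ℂ)) = (((b - n * h : ℝ)) : ℂ) := by push_cast; ring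
          rw [this, cot_half a (b - n * h) ha0]
      _ = (∑ n ∈ s, -((Real.tanh (Real.pi * (b - n * h) / a) : ℝ) : ℂ)) * Complex.I := by
          rw [Finset.sum_mul]
      _ = -(∑ n ∈ s, ((Real.tanh (Real.pi * (b - n * h) / a) : ℝ) : ℂ)) * Complex.I := by
          rw [Finset.sum_neg_distrib]
  have hre : (∑ n ∈ s, ((Real.tanh (Real.pi * (b - n * h) / a) : ℝ) : ℂ))
      = ∑ n ∈ s, ((Real.tanh (Real.pi * (b + n * h) / a) : ℝ) : ℂ) := by
    refine Finset.sum_nbij' (fun n => -n) (fun n => -n) ?_ ?_ ?_ ?_ ?_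
    · intro n hn; simp only [hs, Finset.mem_Icc] at hn ⊢; omega
    · intro n hn; simp only [hs, Finset.mem_Icc] at hn ⊢; omega
    · intro n _; ring
    · intro n _; ring
    · intro n _; push_cast; ring_nf
  have key1 : (1 / Complex.I) *
      ((∑ n ∈ s.erase 0,
          Complex.cot (-(Real.pi : ℂ) * (n : ℂ) * (h : ℂ) * Complex.I / (a : ℂ))) -
        ∑ n ∈ s,
          Complex.cot ((Real.pi : ℂ) * ((a : ℂ) / 2 + ((b : ℂ) - (n : ℂ) * (h : ℂ)) * Complex.I) / (a : ℂ)))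
      = ∑ n ∈ s, ((Real.tanh (Real.pi * (b + n * h) / a) : ℝ) : ℂ) := by
    rw [hzero, hsum2, hre, velocity_aux1]
  have hsum3 : (∑ n ∈ s,
      Complex.cot ((Real.pi : ℂ) * (-(a : ℂ) / 2 - ((b : ℂ) + (n : ℂ) * (h : ℂ)) * Complex.I) / (a : ℂ)))
      = (∑ n ∈ s, ((Real.tanh (Real.pi * (b + n * h) / a) : ℝ) : ℂ)) * Complex.I := by
    rw [Finset.sum_mul]
    refine Finset.sum_congr rfl fun n _ => ?_
    have harg : (Real.pi : ℂ) * (-(a : ℂ) / 2 - ((b : ℂ) + (n : ℂ) * (h : ℂ)) * Complex.I) / (a : ℂ)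
        = -((Real.pi : ℂ) * ((a : ℂ) / 2 + (((b + n * h : ℝ)) : ℂ) * Complex.I) / (a : ℂ)) := by
      push_cast; ring
    rw [harg, cot_neg', cot_half a (b + n * h) ha0]
    ring
  have key2 : (1 / Complex.I) *
      ((∑ n ∈ s,
          Complex.cot ((Real.pi : ℂ) * (-(a : ℂ) / 2 - ((b : ℂ) + (n : ℂ) * (h : ℂ)) * Complex.I) / (a : ℂ))) -
        ∑ n ∈ s.erase 0,
          Complex.cot (-(Real.pi : ℂ) * (n : ℂ) * (h : ℂ) * Complex.I / (a : ℂ)))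
      = ∑ n ∈ s, ((Real.tanh (Real.pi * (b + n * h) / a) : ℝ) : ℂ) := by
    rw [hzero, hsum3, velocity_aux2]
  exact ⟨key1, key1.trans key2.symm⟩
end

section
/- Let a > 0, h > 0, and b ∈ ℝ. Then: (i) the family n ↦ tanh(π(b+nh)/a) + tanh(π(b−nh)/a), indexed by integers n ≥ 1, is summable; and (ii) the symmetric partial sums Σ_{n=−N}^{N} tanh(π(b+nh)/a) converge as N → ∞ to tanh(πb/a) + Σ_{n=1}^{∞} [ tanh(π(b+nh)/a) + tanh(π(b−nh)/a) ]. In particular the street velocity U := lim_{N→∞} U_N, with U_N := (Γ/2a) Σ_{n=−N}^{N} tanh(π(b+nh)/a), exists for every Γ ∈ ℝ. -/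
open Filter Finset

lemma tanh_sub_one_abs (x : ℝ) : |Real.tanh x - 1| ≤ 2 * Real.exp (-(2*x)) := by
  have hc : (0:ℝ) < Real.cosh x := Real.cosh_pos x
  have h1 : Real.tanh x - 1 = -Real.exp (-x) / Real.cosh x := by
    rw [Real.tanh_eq_sinh_div_cosh]
    field_simp
    rw [Real.sinh_eq, Real.cosh_eq]; ring
  rw [h1, abs_div, abs_neg, abs_of_pos (Real.exp_pos _), abs_of_pos hc]
  have hcosh : Real.exp x / 2 ≤ Real.cosh x := by
    rw [Real.cosh_eq]
    have := (Real.exp_pos (-x)).le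
    linarith
  have hex : (0:ℝ) < Real.exp x / 2 := by positivity
  calc Real.exp (-x) / Real.cosh x ≤ Real.exp (-x) / (Real.exp x / 2) :=
        div_le_div_of_nonneg_left (Real.exp_pos _).le hex hcosh
    _ = 2 * Real.exp (-(2*x)) := by
        rw [div_div_eq_mul_div, mul_comm, mul_div_assoc, ← Real.exp_sub]
        ring_nf

lemma tanh_add_one_abs (x : ℝ) : |Real.tanh x + 1| ≤ 2 * Real.exp (2*x) := by
  have := tanh_sub_one_abs (-x)
  rw [Real.tanh_neg] at this
  calc |Real.tanh x + 1| = |-Real.tanh x - 1| := by rw [← abs_neg]; ring_nf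
    _ ≤ 2 * Real.exp (-(2 * -x)) := this
    _ = 2 * Real.exp (2*x) := by ring_nf

lemma sum_Icc_symm (f : ℤ → ℝ) (N : ℕ) :
    ∑ n ∈ Finset.Icc (-(N:ℤ)) (N:ℤ), f n
      = f 0 + ∑ n ∈ Finset.range N, (f (n+1) + f (-(n+1))) := by
  induction N with
  | zero => simp
  | succ N ih =>
    have hset : Finset.Icc (-((N:ℤ)+1)) ((N:ℤ)+1)
        = insert (-((N:ℤ)+1)) (insert ((N:ℤ)+1) (Finset.Icc (-(N:ℤ)) (N:ℤ))) := by
      ext x; simp [Finset.mem_Icc, Finset.mem_insert]; omega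
    have h1 : (-((N:ℤ)+1)) ∉ insert ((N:ℤ)+1) (Finset.Icc (-(N:ℤ)) (N:ℤ)) := by
      simp [Finset.mem_Icc]; omega
    have h2 : ((N:ℤ)+1) ∉ Finset.Icc (-(N:ℤ)) (N:ℤ) := by simp
    push_cast
    rw [hset, Finset.sum_insert h1, Finset.sum_insert h2, Finset.sum_range_succ]
    push_cast at ih
    rw [ih]; push_cast; ring

/-- Convergence of the street velocity of the infinite array: the paired tail terms
are summable, the symmetric partial sums of `tanh(π(b+nh)/a)` converge to
`tanh(πb/a)` plus the sum of the pairs, and in particular the street velocity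
`U = lim U_N` exists for every `Γ`. -/
theorem array_velocity_converges (a h b : ℝ) (ha : 0 < a) (hh : 0 < h) :
    Summable (fun n : ℕ =>
      Real.tanh (Real.pi * (b + (n + 1) * h) / a) +
        Real.tanh (Real.pi * (b - (n + 1) * h) / a)) ∧
    Tendsto
      (fun N : ℕ => ∑ n ∈ Finset.Icc (-(N : ℤ)) (N : ℤ), Real.tanh (Real.pi * (b + n * h) / a))
      atTop
      (nhds (Real.tanh (Real.pi * b / a) +
        ∑' n : ℕ, (Real.tanh (Real.pi * (b + (n + 1) * h) / a) +
          Real.tanh (Real.pi * (b - (n + 1) * h) / a)))) ∧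
    ∀ Γ : ℝ, ∃ U : ℝ,
      Tendsto
        (fun N : ℕ => (Γ / (2 * a)) *
          ∑ n ∈ Finset.Icc (-(N : ℤ)) (N : ℤ), Real.tanh (Real.pi * (b + n * h) / a))
        atTop (nhds U) := by
  set g : ℕ → ℝ := fun n =>
    Real.tanh (Real.pi * (b + (n + 1) * h) / a) +
      Real.tanh (Real.pi * (b - (n + 1) * h) / a) with hg
  have hr : Real.exp (-(2 * Real.pi * h / a)) < 1 := by
    rw [Real.exp_lt_one_iff]
    have : 0 < 2 * Real.pi * h / a := by positivity
    linarith
  have hr0 : (0:ℝ) ≤ Real.exp (-(2 * Real.pi * h / a)) := (Real.exp_pos _).le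
  set r := Real.exp (-(2 * Real.pi * h / a)) with hrdef
  set C := (2 * Real.exp (-(2 * Real.pi * b / a)) + 2 * Real.exp (2 * Real.pi * b / a)) * r with hC
  have hsum : Summable g := by
    apply Summable.of_norm_bounded (g := fun n => C * r ^ n)
      ((summable_geometric_of_lt_one hr0 hr).mul_left C)
    intro n
    have hb1 := tanh_sub_one_abs (Real.pi * (b + (n + 1) * h) / a)
    have hb2 := tanh_add_one_abs (Real.pi * (b - (n + 1) * h) / a)
    have key : ‖g n‖ ≤ 2 * Real.exp (-(2 * (Real.pi * (b + (n + 1) * h) / a)))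
        + 2 * Real.exp (2 * (Real.pi * (b - (n + 1) * h) / a)) := by
      calc ‖g n‖ = |(Real.tanh (Real.pi * (b + (n + 1) * h) / a) - 1)
            + (Real.tanh (Real.pi * (b - (n + 1) * h) / a) + 1)| := by
            rw [Real.norm_eq_abs, hg]; ring_nf
        _ ≤ _ := le_trans (abs_add_le _ _) (add_le_add hb1 hb2)
    refine key.trans ?_
    have e1 : Real.exp (-(2 * (Real.pi * (b + (n + 1) * h) / a)))
        = Real.exp (-(2 * Real.pi * b / a)) * r ^ (n+1) := by
      rw [hrdef, ← Real.exp_nat_mul, ← Real.exp_add]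
      congr 1
      push_cast
      field_simp
      ring
    have e2 : Real.exp (2 * (Real.pi * (b - (n + 1) * h) / a))
        = Real.exp (2 * Real.pi * b / a) * r ^ (n+1) := by
      rw [hrdef, ← Real.exp_nat_mul, ← Real.exp_add]
      congr 1
      push_cast
      field_simp
      ring
    rw [e1, e2, hC]
    rw [pow_succ]
    ring_nf
    exact le_rfl
  have hid : ∀ N : ℕ, ∑ n ∈ Finset.Icc (-(N : ℤ)) (N : ℤ),
      Real.tanh (Real.pi * (b + n * h) / a)
      = Real.tanh (Real.pi * b / a) + ∑ n ∈ Finset.range N, g n := by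
    intro N
    have := sum_Icc_symm (fun n : ℤ => Real.tanh (Real.pi * (b + n * h) / a)) N
    rw [this]
    congr 1
    · norm_num
    · apply Finset.sum_congr rfl
      intro n _
      push_cast
      ring_nf
      simp only [hg]; ring_nf
  have htend : Tendsto
      (fun N : ℕ => ∑ n ∈ Finset.Icc (-(N : ℤ)) (N : ℤ),
        Real.tanh (Real.pi * (b + n * h) / a)) atTop
      (nhds (Real.tanh (Real.pi * b / a) + ∑' n, g n)) := by
    have h2 := hsum.hasSum.tendsto_sum_nat
    have := Tendsto.add (tendsto_const_nhds (x := Real.tanh (Real.pi * b / a)) (f := (atTop : Filter ℕ))) h2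
    refine Tendsto.congr (fun N => (hid N).symm) this
  exact ⟨hsum, htend, fun Γ => ⟨_, htend.const_mul (Γ / (2 * a))⟩⟩
end

section
/- Let a > 0, h > 0, b > 0, and Γ > 0. Then the sequence U_N := (Γ/2a) Σ_{n=−N}^{N} tanh(π(b+nh)/a) is strictly increasing in N, and its limit U = lim_{N→∞} U_N satisfies U > (Γ/2a)·tanh(πb/a); that is, the infinite array of streets translates strictly faster than a single isolated street. -/
open Filter Finset

lemma tanh_exp_form (t : ℝ) :
    Real.tanh t = (Real.exp t ^ 2 - 1) / (Real.exp t ^ 2 + 1) := by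
  have h1 : Real.exp t > 0 := Real.exp_pos t
  rw [Real.tanh_eq_sinh_div_cosh, Real.sinh_eq, Real.cosh_eq, Real.exp_neg]
  field_simp

lemma tanh_lt_tanh {x y : ℝ} (hxy : x < y) : Real.tanh x < Real.tanh y := by
  rw [tanh_exp_form, tanh_exp_form]
  have hx : 0 < Real.exp x := Real.exp_pos x
  have hy : 0 < Real.exp y := Real.exp_pos y
  have h : Real.exp x < Real.exp y := Real.exp_lt_exp.2 hxy
  rw [div_lt_div_iff₀ (by positivity) (by positivity)]
  nlinarith

lemma tanh_le_one (t : ℝ) : Real.tanh t ≤ 1 := by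
  rw [tanh_exp_form]
  have : 0 < Real.exp t ^ 2 + 1 := by positivity
  rw [div_le_one this]; linarith

lemma one_sub_le_tanh (s : ℝ) : 1 - 2 * Real.exp (-(2*s)) ≤ Real.tanh s := by
  rw [tanh_exp_form]
  have h1 : 0 < Real.exp s ^ 2 + 1 := by positivity
  rw [sub_le_iff_le_add, div_add' _ _ _ (ne_of_gt h1), le_div_iff₀ h1]
  have h2 : Real.exp (-(2*s)) = 1 / Real.exp s ^ 2 := by
    rw [Real.exp_neg]; rw [show (2:ℝ)*s = s + s by ring, Real.exp_add]; ring_nf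
  rw [h2]
  have h3 : 0 < Real.exp s ^ 2 := by positivity
  have h4 : 2 * (1 / Real.exp s ^ 2) * (Real.exp s ^ 2 + 1) = 2 + 2 / Real.exp s ^ 2 := by
    field_simp
  rw [h4]
  have h5 : 0 < 2 / Real.exp s ^ 2 := by positivity
  nlinarith

/-- For positive parameters, the truncated street velocities `U_N` are strictly
increasing in `N` and their limit exceeds the velocity of a single isolated street. -/
theorem array_faster_than_single_street (a h b Γ : ℝ)
    (ha : 0 < a) (hh : 0 < h) (hb : 0 < b) (hΓ : 0 < Γ) :
    StrictMono (fun N : ℕ => (Γ / (2 * a)) *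
      ∑ n ∈ Finset.Icc (-(N : ℤ)) (N : ℤ), Real.tanh (Real.pi * (b + n * h) / a)) ∧
    ∃ U : ℝ,
      Tendsto (fun N : ℕ => (Γ / (2 * a)) *
          ∑ n ∈ Finset.Icc (-(N : ℤ)) (N : ℤ), Real.tanh (Real.pi * (b + n * h) / a))
        atTop (nhds U) ∧
      (Γ / (2 * a)) * Real.tanh (Real.pi * b / a) < U := by
  have hπ := Real.pi_pos
  have hc : 0 < Γ / (2 * a) := by positivity
  set c := Γ / (2 * a) with hcdef
  set f : ℤ → ℝ := fun n => Real.tanh (Real.pi * (b + n * h) / a) with hf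
  set S : ℕ → ℝ := fun N => ∑ n ∈ Finset.Icc (-(N : ℤ)) (N : ℤ), f n with hSdef
  -- step formula
  have hstep : ∀ N : ℕ, S (N + 1) = S N + (f (N + 1) + f (-(N + 1))) := by
    intro N
    have hset : Finset.Icc (-((N:ℕ)+1 : ℕ) : ℤ) (((N:ℕ)+1 : ℕ) : ℤ)
        = insert ((N : ℤ) + 1) (insert (-((N : ℤ) + 1)) (Finset.Icc (-(N : ℤ)) (N : ℤ))) := by
      ext x
      simp only [Finset.mem_Icc, Finset.mem_insert]
      push_cast
      omega
    have h1 : ((N : ℤ) + 1) ∉ insert (-((N : ℤ) + 1)) (Finset.Icc (-(N : ℤ)) (N : ℤ)) := by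
      simp only [Finset.mem_insert, Finset.mem_Icc]; omega
    have h2 : (-((N : ℤ) + 1)) ∉ Finset.Icc (-(N : ℤ)) (N : ℤ) := by
      simp only [Finset.mem_Icc]; omega
    show (∑ n ∈ Finset.Icc (-((N:ℕ)+1 : ℕ) : ℤ) (((N:ℕ)+1 : ℕ) : ℤ), f n) = _
    rw [hset, Finset.sum_insert h1, Finset.sum_insert h2]
    have : f ((N : ℤ) + 1) = f ((N : ℕ) + 1 : ℤ) := by push_cast; ring_nf
    have : f (-((N : ℤ) + 1)) = f (-((N : ℕ) + 1 : ℤ)) := by push_cast; ring_nf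
    push_cast
    ring
  -- pair positivity
  have hpairpos : ∀ m : ℤ, 0 < m → 0 < f m + f (-m) := by
    intro m hm
    have hm' : (0:ℝ) < m := by exact_mod_cast hm
    have hneg : f (-m) = -Real.tanh (Real.pi * ((m : ℝ) * h - b) / a) := by
      simp only [hf]
      rw [← Real.tanh_neg]
      congr 1
      push_cast
      ring
    have harg : Real.pi * ((m : ℝ) * h - b) / a < Real.pi * (b + (m : ℝ) * h) / a := by
      rw [div_lt_div_iff₀ ha ha]
      nlinarith [mul_pos (mul_pos hπ hb) ha]
    have := tanh_lt_tanh harg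
    simp only [hf] at *
    rw [hneg]
    linarith
  -- pair bound
  set r : ℝ := Real.exp (-(2 * Real.pi * h / a)) with hrdef
  set C : ℝ := 2 * Real.exp (2 * Real.pi * b / a) with hCdef
  have hr0 : 0 < r := Real.exp_pos _
  have hr1 : r < 1 := by
    rw [hrdef, Real.exp_lt_one_iff]
    have : 0 < 2 * Real.pi * h / a := by positivity
    linarith
  have hC0 : 0 < C := by positivity
  have hpairle : ∀ m : ℕ, f (m : ℤ) + f (-(m : ℤ)) ≤ C * r ^ m := by
    intro m
    have hneg : f (-(m : ℤ)) = -Real.tanh (Real.pi * ((m : ℝ) * h - b) / a) := by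
      simp only [hf]
      rw [← Real.tanh_neg]
      congr 1
      push_cast
      ring
    have h1 : f (m : ℤ) ≤ 1 := by simp only [hf]; exact tanh_le_one _
    have h2 := one_sub_le_tanh (Real.pi * ((m : ℝ) * h - b) / a)
    have hexp : Real.exp (-(2 * (Real.pi * ((m : ℝ) * h - b) / a)))
        = Real.exp (2 * Real.pi * b / a) * r ^ m := by
      rw [hrdef, ← Real.exp_nat_mul, ← Real.exp_add]
      congr 1
      field_simp
      ring
    rw [hneg]
    have : f (m : ℤ) - Real.tanh (Real.pi * ((m : ℝ) * h - b) / a)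
        ≤ 1 - (1 - 2 * Real.exp (-(2 * (Real.pi * ((m : ℝ) * h - b) / a)))) := by
      linarith
    calc f (m : ℤ) + -Real.tanh (Real.pi * ((m : ℝ) * h - b) / a)
        ≤ 2 * Real.exp (-(2 * (Real.pi * ((m : ℝ) * h - b) / a))) := by linarith
      _ = C * r ^ m := by rw [hexp, hCdef]; ring
  -- bounded above
  set D : ℝ := C / (1 - r) with hDdef
  have hD0 : 0 < D := by
    apply div_pos hC0; linarith
  have hDrel : D * (1 - r) = C := by
    rw [hDdef]; exact div_mul_cancel₀ C (by linarith)
  have hbnd : ∀ N : ℕ, S N + D * r ^ (N + 1) ≤ S 0 + D * r := by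
    intro N
    induction N with
    | zero => simp
    | succ n ih =>
      have h1 := hpairle (n + 1)
      have h2 : f ((n:ℤ) + 1) + f (-((n:ℤ) + 1)) ≤ C * r ^ (n + 1) := by
        have e1 : ((n + 1 : ℕ) : ℤ) = (n : ℤ) + 1 := by push_cast; ring
        rw [e1] at h1
        exact h1
      have hst := hstep n
      have hr' : 0 < r ^ (n + 1) := pow_pos hr0 _
      have key : S (n + 1) + D * r ^ (n + 2) ≤ S n + D * r ^ (n + 1) := by
        rw [hst]
        have : C * r ^ (n + 1) + D * r ^ (n + 2) = D * r ^ (n + 1) := by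
          have : r ^ (n + 2) = r ^ (n + 1) * r := by ring
          rw [this, ← hDrel]; ring
        nlinarith [h2]
      linarith
  have hub : ∀ N : ℕ, S N ≤ S 0 + D * r := by
    intro N
    have := hbnd N
    have : 0 < D * r ^ (N + 1) := by positivity
    linarith [hbnd N]
  -- the sequence
  have hmono : StrictMono (fun N : ℕ => c * S N) := by
    apply strictMono_nat_of_lt_succ
    intro N
    have := hpairpos ((N:ℤ) + 1) (by omega)
    have hst := hstep N
    have : S N < S (N + 1) := by
      rw [hst]
      linarith
    exact mul_lt_mul_of_pos_left this hc
  refine ⟨hmono, ?_⟩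
  have hbdd : BddAbove (Set.range fun N : ℕ => c * S N) := by
    refine ⟨c * (S 0 + D * r), ?_⟩
    rintro x ⟨N, rfl⟩
    exact mul_le_mul_of_nonneg_left (hub N) hc.le
  refine ⟨⨆ N : ℕ, c * S N, tendsto_atTop_ciSup hmono.monotone hbdd, ?_⟩
  have hS0 : S 0 = Real.tanh (Real.pi * b / a) := by
    simp only [hSdef, Nat.cast_zero, neg_zero, Finset.Icc_self, Finset.sum_singleton, hf]
    norm_num
  calc c * Real.tanh (Real.pi * b / a) = c * S 0 := by rw [hS0]
    _ < c * S 1 := hmono (by norm_num)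
    _ ≤ ⨆ N : ℕ, c * S N := le_ciSup hbdd 1
end

section
/- Let a > 0, b ∈ ℝ, Γ ∈ ℝ, and for h > 0 let U(h) := (Γ/2a)[ tanh(πb/a) + Σ_{n=1}^{∞} ( tanh(π(b+nh)/a) + tanh(π(b−nh)/a) ) ]. Then U(h) → (Γ/2a)·tanh(πb/a) as h → ∞; that is, as the separation between adjacent streets grows, the translational velocity of the infinite array converges to the translational velocity of a single isolated street. -/
open Filter

lemma key_tanh_bound (u v : ℝ) :
    |Real.tanh (v + u) + Real.tanh (v - u)| ≤
      4 * |Real.sinh (2 * v)| * Real.exp (-(2 * u)) := by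
  have hc1 : 0 < Real.cosh (v + u) := Real.cosh_pos _
  have hc2 : 0 < Real.cosh (v - u) := Real.cosh_pos _
  have hkey : Real.sinh (2 * v)
      = Real.sinh (v + u) * Real.cosh (v - u) + Real.cosh (v + u) * Real.sinh (v - u) := by
    rw [show 2 * v = (v + u) + (v - u) by ring, Real.sinh_add]
  have hsum : Real.tanh (v + u) + Real.tanh (v - u)
      = Real.sinh (2 * v) / (Real.cosh (v + u) * Real.cosh (v - u)) := by
    rw [Real.tanh_eq_sinh_div_cosh, Real.tanh_eq_sinh_div_cosh, hkey]
    field_simp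
  have hden : Real.exp (2 * u) / 4 ≤ Real.cosh (v + u) * Real.cosh (v - u) := by
    have h1 := Real.cosh_add (v + u) (v - u)
    have h2 := Real.cosh_sub (v + u) (v - u)
    have h3 : Real.cosh ((v + u) + (v - u)) = Real.cosh (2 * v) := by ring_nf
    have h4 : Real.cosh ((v + u) - (v - u)) = Real.cosh (2 * u) := by ring_nf
    have h5 : (0:ℝ) < Real.cosh (2 * v) := Real.cosh_pos _
    have h6 : Real.exp (2 * u) / 2 ≤ Real.cosh (2 * u) := by
      rw [Real.cosh_eq]
      have := Real.exp_pos (-(2 * u))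
      linarith
    nlinarith
  rw [hsum, abs_div, abs_of_pos (by positivity : (0:ℝ) < Real.cosh (v + u) * Real.cosh (v - u))]
  have h7 : Real.exp (-(2*u)) = (Real.exp (2*u))⁻¹ := Real.exp_neg _
  rw [div_le_iff₀ (by positivity), h7]
  have h8 : Real.exp (2 * u) / 4 * (4 * |Real.sinh (2 * v)| * (Real.exp (2*u))⁻¹)
      = |Real.sinh (2*v)| := by
    field_simp
  calc |Real.sinh (2 * v)|
      = Real.exp (2 * u) / 4 * (4 * |Real.sinh (2 * v)| * (Real.exp (2*u))⁻¹) := h8.symm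
    _ ≤ Real.cosh (v + u) * Real.cosh (v - u) * (4 * |Real.sinh (2 * v)| * (Real.exp (2*u))⁻¹) := by
        apply mul_le_mul_of_nonneg_right hden (by positivity)
    _ = 4 * |Real.sinh (2 * v)| * (Real.exp (2*u))⁻¹ * (Real.cosh (v + u) * Real.cosh (v - u)) := by
        ring

/-- As the separation `h` between adjacent streets grows, the translational velocity
of the infinite array converges to that of a single isolated street. -/
theorem array_velocity_tendsto_single_street (a b Γ : ℝ) (ha : 0 < a) :
    Tendsto
      (fun h : ℝ => (Γ / (2 * a)) * (Real.tanh (Real.pi * b / a) +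
        ∑' n : ℕ, (Real.tanh (Real.pi * (b + (n + 1) * h) / a) +
          Real.tanh (Real.pi * (b - (n + 1) * h) / a))))
      atTop
      (nhds ((Γ / (2 * a)) * Real.tanh (Real.pi * b / a))) := by
  have hπ : 0 < Real.pi := Real.pi_pos
  set v : ℝ := Real.pi * b / a with hv
  set C : ℝ := 4 * |Real.sinh (2 * v)| with hCdef
  have hC0 : 0 ≤ C := by positivity
  -- the exponential factor tends to 0
  have hr : Tendsto (fun h : ℝ => Real.exp (-(2 * Real.pi / a) * h)) atTop (nhds 0) :=
    Real.tendsto_exp_atBot.comp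
      (tendsto_id.const_mul_atTop_of_neg (neg_lt_zero.mpr (by positivity)))
  -- the series tends to 0
  have hS : Tendsto
      (fun h : ℝ => ∑' n : ℕ, (Real.tanh (Real.pi * (b + (n + 1) * h) / a) +
        Real.tanh (Real.pi * (b - (n + 1) * h) / a))) atTop (nhds 0) := by
    have hlim : Tendsto (fun h : ℝ => C * (2 * Real.exp (-(2 * Real.pi / a) * h))) atTop
        (nhds 0) := by
      have : Tendsto (fun h : ℝ => C * (2 * Real.exp (-(2 * Real.pi / a) * h))) atTop
          (nhds (C * (2 * 0))) := ((hr.const_mul 2).const_mul C)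
      simpa using this
    refine squeeze_zero_norm' ?_ hlim
    · filter_upwards [hr.eventually_lt_const (one_half_pos (α := ℝ)), eventually_gt_atTop (0:ℝ)]
        with h hrh hh0
      set r : ℝ := Real.exp (-(2 * Real.pi / a) * h) with hrdef
      have hr0 : 0 < r := Real.exp_pos _
      have hrhalf : r < 1/2 := hrh
      have hr1 : r < 1 := by linarith
      have hterm : ∀ n : ℕ,
          |Real.tanh (Real.pi * (b + (n + 1) * h) / a) +
            Real.tanh (Real.pi * (b - (n + 1) * h) / a)| ≤ C * r ^ (n + 1) := by
        intro n
        have e1 : Real.pi * (b + ((n:ℝ) + 1) * h) / a = v + Real.pi * ((n:ℝ) + 1) * h / a := by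
          rw [hv]; ring
        have e2 : Real.pi * (b - ((n:ℝ) + 1) * h) / a = v - Real.pi * ((n:ℝ) + 1) * h / a := by
          rw [hv]; ring
        have e3 : Real.exp (-(2 * (Real.pi * ((n:ℝ) + 1) * h / a))) = r ^ (n + 1) := by
          rw [hrdef, ← Real.exp_nat_mul]
          congr 1
          push_cast
          ring
        rw [e1, e2]
        calc |Real.tanh (v + Real.pi * ((n:ℝ) + 1) * h / a) +
              Real.tanh (v - Real.pi * ((n:ℝ) + 1) * h / a)|
            ≤ 4 * |Real.sinh (2 * v)| * Real.exp (-(2 * (Real.pi * ((n:ℝ) + 1) * h / a))) :=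
              key_tanh_bound _ _
          _ = C * r ^ (n + 1) := by rw [e3]
      have hgeo : Summable (fun n : ℕ => C * r ^ (n + 1)) :=
        (((summable_geometric_of_lt_one hr0.le hr1).mul_left (C * r)).congr
          (fun n => by rw [pow_succ]; ring))
      have hterm' : ∀ n : ℕ,
          ‖Real.tanh (Real.pi * (b + (n + 1) * h) / a) +
            Real.tanh (Real.pi * (b - (n + 1) * h) / a)‖ ≤ C * r ^ (n + 1) := by
        intro n; rw [Real.norm_eq_abs]; exact hterm n
      have hnorm : Summable (fun n : ℕ =>
          ‖Real.tanh (Real.pi * (b + (n + 1) * h) / a) +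
            Real.tanh (Real.pi * (b - (n + 1) * h) / a)‖) :=
        Summable.of_nonneg_of_le (fun n => norm_nonneg _) hterm' hgeo
      calc ‖∑' n : ℕ, (Real.tanh (Real.pi * (b + (n + 1) * h) / a) +
              Real.tanh (Real.pi * (b - (n + 1) * h) / a))‖
          ≤ ∑' n : ℕ, ‖(Real.tanh (Real.pi * (b + (n + 1) * h) / a) +
              Real.tanh (Real.pi * (b - (n + 1) * h) / a))‖ :=
            norm_tsum_le_tsum_norm hnorm
        _ ≤ ∑' n : ℕ, C * r ^ (n + 1) :=
            Summable.tsum_le_tsum hterm' hnorm hgeo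
        _ = C * r * (1 - r)⁻¹ := by
            have : ∀ n : ℕ, C * r ^ (n + 1) = (C * r) * r ^ n := by
              intro n; rw [pow_succ]; ring
            simp_rw [this]
            rw [tsum_mul_left, tsum_geometric_of_lt_one hr0.le hr1]
        _ ≤ C * (2 * r) := by
            have h1r : (1:ℝ)/2 ≤ 1 - r := by linarith
            have h2 : (1 - r)⁻¹ ≤ 2 := by
              rw [inv_le_comm₀ (by linarith) (by norm_num)]
              linarith
            calc C * r * (1 - r)⁻¹ ≤ C * r * 2 := by
                  apply mul_le_mul_of_nonneg_left h2 (by positivity)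
              _ = C * (2 * r) := by ring
  have := ((hS.const_add (Real.tanh v)).const_mul (Γ / (2 * a)))
  simpa using this
end

section
/- Let a > 0, b > 0, and Γ > 0, and for h > 0 let U(h) := (Γ/2a)[ tanh(πb/a) + Σ_{n=1}^{∞} ( tanh(π(b+nh)/a) + tanh(π(b−nh)/a) ) ]. Then U is strictly decreasing on (0, ∞): if 0 < h₁ < h₂ then U(h₁) > U(h₂). -/
private lemma tanh_add_tanh (u v : ℝ) :
    Real.tanh u + Real.tanh v = Real.sinh (u + v) / (Real.cosh u * Real.cosh v) := by
  rw [Real.tanh_eq_sinh_div_cosh, Real.tanh_eq_sinh_div_cosh, Real.sinh_add]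
  field_simp [(Real.cosh_pos u).ne', (Real.cosh_pos v).ne']

private lemma cosh_mul_cosh (c x : ℝ) :
    Real.cosh (c + x) * Real.cosh (c - x) = (Real.cosh (2 * c) + Real.cosh (2 * x)) / 2 := by
  rw [Real.cosh_add, Real.cosh_sub, Real.cosh_two_mul, Real.cosh_two_mul]
  nlinarith [Real.sinh_sq c, Real.sinh_sq x]

private lemma pair_eq (c x : ℝ) :
    Real.tanh (c + x) + Real.tanh (c - x)
      = Real.sinh (2 * c) / ((Real.cosh (2 * c) + Real.cosh (2 * x)) / 2) := by
  rw [tanh_add_tanh, show c + x + (c - x) = 2 * c by ring, cosh_mul_cosh]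

private lemma pair_pos {c : ℝ} (hc : 0 < c) (x : ℝ) :
    0 < Real.tanh (c + x) + Real.tanh (c - x) := by
  rw [pair_eq]
  exact div_pos (Real.sinh_pos_iff.2 (by linarith))
    (by positivity)

private lemma pair_lt {c x y : ℝ} (hc : 0 < c) (hx : 0 < x) (hxy : x < y) :
    Real.tanh (c + y) + Real.tanh (c - y) < Real.tanh (c + x) + Real.tanh (c - x) := by
  rw [pair_eq, pair_eq]
  apply div_lt_div_of_pos_left (Real.sinh_pos_iff.2 (by linarith)) (by positivity)
  have : Real.cosh (2 * x) < Real.cosh (2 * y) := by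
    rw [Real.cosh_lt_cosh]
    rw [abs_of_pos (by linarith), abs_of_pos (by linarith)]
    linarith
  linarith

private lemma summable_pairs {c t : ℝ} (hc : 0 < c) (ht : 0 < t) :
    Summable (fun n : ℕ => Real.tanh (c + (n + 1) * t) + Real.tanh (c - (n + 1) * t)) := by
  have hr : Real.exp (-(2 * t)) < 1 := Real.exp_lt_one_iff.2 (by linarith)
  have hr0 : 0 ≤ Real.exp (-(2 * t)) := (Real.exp_pos _).le
  have hgeo : Summable (fun n : ℕ => (4 * Real.sinh (2 * c)) * Real.exp (-(2 * t)) ^ (n + 1)) := by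
    apply Summable.mul_left
    exact (summable_geometric_of_lt_one hr0 hr).comp_injective (add_left_injective 1)
  apply Summable.of_nonneg_of_le (fun n => (pair_pos hc _).le) _ hgeo
  intro n
  rw [pair_eq]
  have hx : (0:ℝ) < (n + 1) * t := by positivity
  have hb1 : Real.exp (2 * ((n + 1) * t)) / 2 ≤ Real.cosh (2 * ((n + 1) * t)) := by
    rw [Real.cosh_eq]
    have := (Real.exp_pos (-(2 * ((n + 1) * t)))).le
    linarith
  have hb2 : Real.exp (2 * ((n + 1) * t)) / 4
      ≤ (Real.cosh (2 * c) + Real.cosh (2 * ((n + 1) * t))) / 2 := by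
    have := Real.one_le_cosh (2 * c)
    linarith
  have hs : 0 < Real.sinh (2 * c) := Real.sinh_pos_iff.2 (by linarith)
  have hexp : Real.exp (-(2 * t)) ^ (n + 1) = Real.exp (-(2 * ((n + 1) * t))) := by
    rw [← Real.exp_nat_mul]
    congr 1
    push_cast
    ring
  set D : ℝ := (Real.cosh (2 * c) + Real.cosh (2 * ((n + 1) * t))) / 2 with hD_def
  have hD : 0 < D := by positivity
  have h4 : Real.exp (2 * ((n + 1) * t)) ≤ 4 * D := by linarith
  rw [hexp, Real.exp_neg, ← div_eq_mul_inv,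
    div_le_div_iff₀ hD (Real.exp_pos _)]
  calc Real.sinh (2 * c) * Real.exp (2 * ((n + 1) * t))
      ≤ Real.sinh (2 * c) * (4 * D) := mul_le_mul_of_nonneg_left h4 hs.le
    _ = 4 * Real.sinh (2 * c) * D := by ring

/-- For positive parameters, the translational velocity of the infinite array is a
strictly decreasing function of the separation `h` between adjacent streets. -/
theorem array_velocity_strictAnti (a b Γ : ℝ) (ha : 0 < a) (hb : 0 < b) (hΓ : 0 < Γ) :
    ∀ h₁ h₂ : ℝ, 0 < h₁ → h₁ < h₂ →
      (Γ / (2 * a)) * (Real.tanh (Real.pi * b / a) +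
        ∑' n : ℕ, (Real.tanh (Real.pi * (b + (n + 1) * h₂) / a) +
          Real.tanh (Real.pi * (b - (n + 1) * h₂) / a))) <
      (Γ / (2 * a)) * (Real.tanh (Real.pi * b / a) +
        ∑' n : ℕ, (Real.tanh (Real.pi * (b + (n + 1) * h₁) / a) +
          Real.tanh (Real.pi * (b - (n + 1) * h₁) / a))) := by
  intro h₁ h₂ hh₁ hlt
  set c := Real.pi * b / a with hc_def
  have hc : 0 < c := by positivity
  have ht₁ : 0 < Real.pi * h₁ / a := by positivity
  have ht₂ : Real.pi * h₁ / a < Real.pi * h₂ / a := by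
    apply div_lt_div_of_pos_right _ ha
    exact mul_lt_mul_of_pos_left hlt Real.pi_pos
  have key : ∀ h : ℝ, (fun n : ℕ => Real.tanh (Real.pi * (b + (n + 1) * h) / a) +
      Real.tanh (Real.pi * (b - (n + 1) * h) / a))
      = fun n : ℕ => Real.tanh (c + (n + 1) * (Real.pi * h / a)) +
        Real.tanh (c - (n + 1) * (Real.pi * h / a)) := by
    intro h
    funext n
    have e1 : Real.pi * (b + (n + 1) * h) / a = c + (n + 1) * (Real.pi * h / a) := by
      rw [hc_def]; ring
    have e2 : Real.pi * (b - (n + 1) * h) / a = c - (n + 1) * (Real.pi * h / a) := by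
      rw [hc_def]; ring
    rw [e1, e2]
  rw [key h₁, key h₂]
  apply mul_lt_mul_of_pos_left _ (by positivity)
  apply (add_lt_add_iff_left _).2
  apply Summable.tsum_lt_tsum_of_nonneg (i := 0)
  · exact fun n => (pair_pos hc _).le
  · intro n
    exact (pair_lt hc (by positivity) (by
      have : (0:ℝ) < (n:ℝ) + 1 := by positivity
      exact (mul_lt_mul_iff_right₀ this).2 ht₂)).le
  · apply pair_lt hc (by positivity)
    have : (0:ℝ) < (0:ℕ) + 1 := by norm_num
    push_cast
    linarith
  · exact summable_pairs hc ht₁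
end

section
/- Let a > 0, h > 0, b ∈ ℝ, and let z ∈ ℂ be such that z ≠ ma + nhi and z ≠ (m+1/2)a + (b+nh)i for all m, n ∈ ℤ. Then the family indexed by n ∈ ℤ given by n ↦ cot( π(z − a/2 − (b+nh)i)/a ) − cot( π(z − nhi)/a ) is summable (absolutely convergent over ℤ). -/
lemma key_exp_aux (w : ℂ) :
    Complex.exp (2 * w * Complex.I) - 1
      = Complex.exp (w * Complex.I) * (2 * Complex.I * Complex.sin w) := by
  have e1 : Complex.exp (w * Complex.I) * Complex.exp (-w * Complex.I) = 1 := by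
    rw [← Complex.exp_add]; ring_nf; exact Complex.exp_zero
  have e2 : Complex.exp (2 * w * Complex.I)
      = Complex.exp (w * Complex.I) * Complex.exp (w * Complex.I) := by
    rw [← Complex.exp_add]; ring_nf
  rw [Complex.sin, e2]
  linear_combination e1 + (Complex.exp (w*Complex.I)^2
    - Complex.exp (w*Complex.I)*Complex.exp (-w*Complex.I)) * Complex.I_sq

lemma cot_sub_I_aux (w : ℂ) (hq : Complex.exp (2 * w * Complex.I) ≠ 1) :
    Complex.cot w - Complex.I = 2 * Complex.I / (Complex.exp (2 * w * Complex.I) - 1) := by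
  have hs : Complex.sin w ≠ 0 := by
    intro h0
    apply hq
    have := key_exp_aux w
    rw [h0] at this
    simpa [sub_eq_zero] using this
  have hq1 : Complex.exp (2 * w * Complex.I) - 1 ≠ 0 := sub_ne_zero.mpr hq
  rw [Complex.cot, eq_div_iff hq1, key_exp_aux w]
  have hce : Complex.cos w - Complex.sin w * Complex.I = Complex.exp (-w * Complex.I) :=
    Complex.cos_sub_sin_I w
  have e1 : Complex.exp (w * Complex.I) * Complex.exp (-w * Complex.I) = 1 := by
    rw [← Complex.exp_add]; ring_nf; exact Complex.exp_zero
  have hX : Complex.cos w / Complex.sin w * Complex.sin w = Complex.cos w := div_mul_cancel₀ _ hs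
  linear_combination (2*Complex.I*Complex.exp (w*Complex.I)) * hX
    + (2*Complex.I*Complex.exp (w*Complex.I)) * hce + 2*Complex.I * e1

lemma norm_cot_sub_I_le_aux (w : ℂ) (hq : 2 ≤ ‖Complex.exp (2 * w * Complex.I)‖) :
    ‖Complex.cot w - Complex.I‖ ≤ 4 / ‖Complex.exp (2 * w * Complex.I)‖ := by
  set q := Complex.exp (2 * w * Complex.I) with hqdef
  have hq1 : q ≠ 1 := by
    intro h; rw [h] at hq; norm_num at hq
  rw [cot_sub_I_aux w hq1, norm_div]
  have h2 : ‖(2 : ℂ) * Complex.I‖ = 2 := by simp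
  rw [h2]
  have hpos : (0:ℝ) < ‖q‖ := lt_of_lt_of_le (by norm_num) hq
  have h1 : ‖q‖ / 2 ≤ ‖q - 1‖ := by
    have := norm_sub_norm_le q 1
    simp only [norm_one] at this
    linarith
  have h3 : (0:ℝ) < ‖q - 1‖ := lt_of_lt_of_le (by linarith) h1
  rw [div_le_div_iff₀ h3 hpos]
  nlinarith

lemma summable_cot_sub_I_aux (c : ℂ) (t : ℝ) (ht : 0 < t) :
    Summable (fun n : ℕ =>
      Complex.cot (c - (n : ℂ) * (t : ℂ) * Complex.I) - Complex.I) := by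
  set K : ℝ := Real.exp (-2 * c.im) with hK
  have hKpos : 0 < K := Real.exp_pos _
  have hnorm : ∀ n : ℕ, ‖Complex.exp (2 * (c - (n : ℂ) * (t : ℂ) * Complex.I) * Complex.I)‖
      = K * Real.exp (2 * t) ^ n := by
    intro n
    rw [Complex.norm_exp]
    have : (2 * (c - (n : ℂ) * (t : ℂ) * Complex.I) * Complex.I).re
        = -2 * c.im + n * (2 * t) := by
      simp [Complex.add_re, Complex.mul_re, Complex.mul_im, Complex.sub_re, Complex.sub_im]
      ring
    rw [this, Real.exp_add, ← Real.exp_nat_mul]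
  have hR : 1 < Real.exp (2 * t) := Real.one_lt_exp_iff.mpr (by linarith)
  apply Summable.of_norm_bounded_eventually_nat
    (g := fun n => (4 / K) * Real.exp (-2 * t) ^ n)
  · apply Summable.mul_left
    apply summable_geometric_of_lt_one (Real.exp_nonneg _)
    rw [Real.exp_lt_one_iff]
    linarith
  · have htend : Filter.Tendsto (fun n : ℕ => K * Real.exp (2 * t) ^ n)
        Filter.atTop Filter.atTop :=
      (tendsto_pow_atTop_atTop_of_one_lt hR).const_mul_atTop hKpos
    filter_upwards [htend.eventually_ge_atTop 2] with n hn
    have hb := norm_cot_sub_I_le_aux (c - (n : ℂ) * (t : ℂ) * Complex.I) (by rw [hnorm]; exact hn)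
    rw [hnorm] at hb
    refine hb.trans (le_of_eq ?_)
    have h1 : Real.exp (-2 * t) = (Real.exp (2 * t))⁻¹ := by
      rw [← Real.exp_neg]; ring_nf
    rw [h1, inv_pow]
    have h2 : Real.exp (2 * t) ^ n ≠ 0 := by positivity
    field_simp

lemma cot_neg_aux (w : ℂ) : Complex.cot (-w) = -Complex.cot w := by
  simp [Complex.cot, Complex.cos_neg, Complex.sin_neg, neg_div, div_neg]

/-- Off the vortex lattice, the cotangent-difference terms of the conjugate velocity
field of the infinite array of streets are absolutely summable over the street
index `n ∈ ℤ`. -/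
theorem array_velocity_field_summable (a h b : ℝ) (ha : 0 < a) (hh : 0 < h) (z : ℂ)
    (hz1 : ∀ m n : ℤ, z ≠ (m : ℂ) * (a : ℂ) + (n : ℂ) * (h : ℂ) * Complex.I)
    (hz2 : ∀ m n : ℤ, z ≠ ((m : ℂ) + 1 / 2) * (a : ℂ) + ((b : ℂ) + (n : ℂ) * (h : ℂ)) * Complex.I) :
    Summable (fun n : ℤ =>
      Complex.cot ((Real.pi : ℂ) * (z - (a : ℂ) / 2 - ((b : ℂ) + (n : ℂ) * (h : ℂ)) * Complex.I) / (a : ℂ)) -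
        Complex.cot ((Real.pi : ℂ) * (z - (n : ℂ) * (h : ℂ) * Complex.I) / (a : ℂ))) := by
  have ha' : (a : ℂ) ≠ 0 := Complex.ofReal_ne_zero.mpr ha.ne'
  set t : ℝ := Real.pi * h / a with htdef
  have ht : 0 < t := by
    have := Real.pi_pos
    positivity
  set c1 : ℂ := (Real.pi : ℂ) * (z - (a : ℂ) / 2 - (b : ℂ) * Complex.I) / (a : ℂ) with hc1
  set c2 : ℂ := (Real.pi : ℂ) * z / (a : ℂ) with hc2
  have hcast : (t : ℂ) = (Real.pi : ℂ) * (h : ℂ) / (a : ℂ) := by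
    rw [htdef]; push_cast; ring
  apply Summable.of_nat_of_neg
  · refine ((summable_cot_sub_I_aux c1 t ht).sub (summable_cot_sub_I_aux c2 t ht)).congr
      fun n => ?_
    have hA : c1 - (n : ℂ) * (t : ℂ) * Complex.I
        = (Real.pi : ℂ) * (z - (a : ℂ) / 2 - ((b : ℂ) + ((n : ℤ) : ℂ) * (h : ℂ)) * Complex.I) / (a : ℂ) := by
      rw [hc1, hcast]; push_cast; field_simp; ring
    have hB : c2 - (n : ℂ) * (t : ℂ) * Complex.I
        = (Real.pi : ℂ) * (z - ((n : ℤ) : ℂ) * (h : ℂ) * Complex.I) / (a : ℂ) := by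
      rw [hc2, hcast]; push_cast; field_simp
    rw [hA, hB]; ring
  · refine (((summable_cot_sub_I_aux (-c1) t ht).sub (summable_cot_sub_I_aux (-c2) t ht)).neg).congr
      fun n => ?_
    have hA : (Real.pi : ℂ) * (z - (a : ℂ) / 2 - ((b : ℂ) + (-(n : ℂ)) * (h : ℂ)) * Complex.I) / (a : ℂ)
        = -(-c1 - (n : ℂ) * (t : ℂ) * Complex.I) := by
      rw [hc1, hcast]; push_cast; field_simp; ring
    have hB : (Real.pi : ℂ) * (z - (-(n : ℂ)) * (h : ℂ) * Complex.I) / (a : ℂ)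
        = -(-c2 - (n : ℂ) * (t : ℂ) * Complex.I) := by
      rw [hc2, hcast]; push_cast; field_simp; ring
    push_cast
    rw [hA, hB, cot_neg_aux, cot_neg_aux]; ring
end

section
/- lim_{N→∞} Σ_{n=−N}^{N} tanh(π(n + 1/2)) = 1. Consequently, for the infinite array of staggered streets with b = a/2 and h = a (the square lattice configuration), the symmetric-truncation street velocity U = lim_{N→∞} (Γ/2a) Σ_{n=−N}^{N} tanh(π(b+nh)/a) equals Γ/(2a), which is exactly the shift constant Γb/(ah) for these parameter values. -/
open Filter Finset

lemma tanh_formula (x : ℝ) :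
    Real.tanh x = (1 - Real.exp (-(2*x))) / (1 + Real.exp (-(2*x))) := by
  rw [Real.tanh_eq_sinh_div_cosh, Real.sinh_eq, Real.cosh_eq]
  have h1 : (0:ℝ) < Real.exp x := Real.exp_pos x
  rw [div_eq_div_iff (by positivity) (by positivity)]
  have h2 : Real.exp (-(2*x)) = Real.exp (-x) * Real.exp (-x) := by
    rw [← Real.exp_add]; ring_nf
  have h3 : Real.exp x * Real.exp (-x) = 1 := by
    rw [← Real.exp_add]; simp
  rw [h2]
  linear_combination Real.exp (-x) * h3

lemma tanh_tendsto : Tendsto Real.tanh atTop (nhds 1) := by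
  have h : Tendsto (fun x : ℝ => (1 - Real.exp (-(2*x))) / (1 + Real.exp (-(2*x))))
      atTop (nhds 1) := by
    have he : Tendsto (fun x : ℝ => Real.exp (-(2*x))) atTop (nhds 0) := by
      apply Real.tendsto_exp_atBot.comp
      exact (tendsto_neg_atBot_iff.mpr
        ((tendsto_const_mul_atTop_of_pos (by norm_num : (0:ℝ) < 2)).mpr tendsto_id))
    have hn : Tendsto (fun x:ℝ => 1 - Real.exp (-(2*x))) atTop (nhds (1-0)) :=
      tendsto_const_nhds.sub he
    have hd : Tendsto (fun x:ℝ => 1 + Real.exp (-(2*x))) atTop (nhds (1+0)) :=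
      tendsto_const_nhds.add he
    have := hn.div hd (by norm_num)
    rw [show ((1:ℝ) - 0) / (1 + 0) = 1 by norm_num] at this
    exact this
  exact h.congr fun x => (tanh_formula x).symm

lemma sum_eq (N : ℕ) :
    ∑ n ∈ Finset.Icc (-(N : ℤ)) (N : ℤ), Real.tanh (Real.pi * ((n : ℝ) + 1 / 2))
      = Real.tanh (Real.pi * ((N : ℝ) + 1 / 2)) := by
  induction N with
  | zero => simp
  | succ N ih =>
    have h1 : (-(((N:ℤ)+1)) : ℤ) ≤ (N:ℤ)+1 := by omega
    have : Finset.Icc (-(((N:ℕ)+1 : ℤ))) (((N:ℕ)+1 : ℤ))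
        = insert (-(((N:ℤ)+1))) (insert ((N:ℤ)+1) (Finset.Icc (-(N:ℤ)) (N:ℤ))) := by
      ext x; simp [Finset.mem_Icc]; omega
    push_cast
    rw [this, Finset.sum_insert (by simp [Finset.mem_Icc]; omega),
      Finset.sum_insert (by simp [Finset.mem_Icc]; try omega), ih]
    have hodd : Real.tanh (Real.pi * (((-(((N:ℤ)+1)) : ℤ) : ℝ) + 1/2))
        = - Real.tanh (Real.pi * ((N : ℝ) + 1 / 2)) := by
      have harg : Real.pi * (((-(((N:ℤ)+1)) : ℤ) : ℝ) + 1/2)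
          = -(Real.pi * ((N : ℝ) + 1 / 2)) := by push_cast; ring
      rw [harg, Real.tanh_neg]
    rw [hodd]
    push_cast
    ring

/-- `lim_{N→∞} ∑_{n=-N}^{N} tanh(π(n+1/2)) = 1`. Consequently, for the square
(Abrikosov) lattice configuration `b = a/2`, `h = a`, the symmetric-truncation street
velocity equals `Γ/(2a)`, which is exactly the shift constant `Γb/(ah)` for these
parameter values. -/
theorem square_lattice_velocity :
    Tendsto
      (fun N : ℕ => ∑ n ∈ Finset.Icc (-(N : ℤ)) (N : ℤ), Real.tanh (Real.pi * ((n : ℝ) + 1 / 2)))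
      atTop (nhds 1) ∧
    ∀ Γ a : ℝ, 0 < a →
      Tendsto
        (fun N : ℕ => (Γ / (2 * a)) *
          ∑ n ∈ Finset.Icc (-(N : ℤ)) (N : ℤ), Real.tanh (Real.pi * (a / 2 + (n : ℝ) * a) / a))
        atTop (nhds (Γ / (2 * a))) ∧
      Γ / (2 * a) = Γ * (a / 2) / (a * a) := by
  have hmain : Tendsto
      (fun N : ℕ => ∑ n ∈ Finset.Icc (-(N : ℤ)) (N : ℤ), Real.tanh (Real.pi * ((n : ℝ) + 1 / 2)))
      atTop (nhds 1) := by
    simp only [sum_eq]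
    apply tanh_tendsto.comp
    apply (tendsto_const_mul_atTop_of_pos Real.pi_pos).mpr
    exact tendsto_atTop_add_const_right _ _ tendsto_natCast_atTop_atTop
  refine ⟨hmain, fun Γ a ha => ⟨?_, by field_simp⟩⟩
  have heq : ∀ N : ℕ, ∑ n ∈ Finset.Icc (-(N : ℤ)) (N : ℤ),
      Real.tanh (Real.pi * (a / 2 + (n : ℝ) * a) / a)
      = ∑ n ∈ Finset.Icc (-(N : ℤ)) (N : ℤ), Real.tanh (Real.pi * ((n : ℝ) + 1 / 2)) := by
    intro N
    apply Finset.sum_congr rfl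
    intro n _
    congr 1
    field_simp
    ring
  simp only [heq]
  have := hmain.const_mul (Γ / (2 * a))
  simpa using this
end
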